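/- For the annulus Ω_r = {r < |z| < 1}, the Szegő metric at the point √r in the unit direction satisfies lim_{r→0⁺} √r · F_S^{Ω_r}(√r, 1) = 1/2. -/

import Mathlib

open Real Filter Topology

/-- `α₀(r,t) = S_r(t,t)`: diagonal Szegő kernel of the annulus `{r < |z| < 1}` w.r.t.
arclength, at a point of modulus `t`. -/
noncomputable def alpha0 (r t : ℝ) : ℝ := (1/(2*π)) * ∑' n : ℤ, t ^ (2*n) / (1 + r ^ (2*n+1))

/-- `α₁(r,t) = ∂_z S_r(z,z)` at `z = t > 0`. -/
noncomputable def alpha1 (r t : ℝ) : ℝ :=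
  (1/(2*π)) * ∑' n : ℤ, (n : ℝ) * t ^ (2*n-1) / (1 + r ^ (2*n+1))

/-- `α₂(r,t) = ∂_z∂_z̄ S_r(z,z)` at `z = t > 0`. -/
noncomputable def alpha2 (r t : ℝ) : ℝ :=
  (1/(2*π)) * ∑' n : ℤ, (n : ℝ)^2 * t ^ (2*n-2) / (1 + r ^ (2*n+1))

/-- The squared Szegő metric of the annulus at the point `t` in the unit direction:
`F_S(t,1)² = (α₀α₂ - α₁²)/α₀²`. -/
noncomputable def szegoMetricSq (r t : ℝ) : ℝ :=
  (alpha0 r t * alpha2 r t - (alpha1 r t)^2) / (alpha0 r t)^2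


noncomputable def gg (r : ℝ) (n : ℕ) : ℝ := r ^ n / (1 + r ^ (2*n+1))
noncomputable def GG (r : ℝ) : ℝ := ∑' n : ℕ, gg r n
noncomputable def NN (r : ℝ) : ℝ := ∑' n : ℕ, (n:ℝ) * gg r n
noncomputable def QQ (r : ℝ) : ℝ := ∑' n : ℕ, (n:ℝ)^2 * gg r n

lemma denom_pos {r : ℝ} (hr : 0 < r) (n : ℕ) : 0 < 1 + r ^ (2*n+1) := by positivity

lemma gg_nonneg {r : ℝ} (hr : 0 < r) (n : ℕ) : 0 ≤ gg r n :=
  div_nonneg (pow_nonneg hr.le n) (denom_pos hr n).le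

lemma gg_le {r : ℝ} (hr : 0 < r) (n : ℕ) : gg r n ≤ r ^ n :=
  div_le_self (pow_nonneg hr.le n) (le_add_of_nonneg_right (pow_nonneg hr.le _))

lemma summable_gg {r : ℝ} (hr : 0 < r) (hr1 : r < 1) : Summable (gg r) :=
  Summable.of_nonneg_of_le (gg_nonneg hr) (gg_le hr) (summable_geometric_of_lt_one hr.le hr1)

lemma summable_pow_gg {r : ℝ} (hr : 0 < r) (hr1 : r < 1) (k : ℕ) :
    Summable (fun n : ℕ => (n:ℝ)^k * gg r n) := by
  refine Summable.of_nonneg_of_le (fun n => mul_nonneg (by positivity) (gg_nonneg hr n))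
    (fun n => ?_) (summable_pow_mul_geometric_of_norm_lt_one k (r := r) ?_)
  · exact mul_le_mul_of_nonneg_left (gg_le hr n) (by positivity)
  · rwa [Real.norm_eq_abs, abs_of_pos hr]
section
variable {r : ℝ}

lemma sqrt_ne (hr : 0 < r) : Real.sqrt r ≠ 0 := (Real.sqrt_pos.mpr hr).ne'

lemma sqrt_pow_even (hr : 0 < r) (n : ℕ) : (Real.sqrt r) ^ (2*n) = r ^ n := by
  rw [pow_mul, Real.sq_sqrt hr.le]

lemma p1 (hr : 0 < r) (n : ℕ) : (Real.sqrt r) ^ (2*(n:ℤ)) = r ^ n := by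
  rw [show (2*(n:ℤ)) = ((2*n:ℕ):ℤ) by push_cast; ring, zpow_natCast, sqrt_pow_even hr]

lemma p2 (n : ℕ) : r ^ (2*(n:ℤ)+1) = r ^ (2*n+1) := by
  rw [show (2*(n:ℤ)+1) = ((2*n+1:ℕ):ℤ) by push_cast; ring, zpow_natCast]

lemma p3 (hr : 0 < r) (n : ℕ) : (Real.sqrt r) ^ (2*(-((n:ℤ)+1))) = (r ^ (n+1))⁻¹ := by
  rw [show (2*(-((n:ℤ)+1))) = -((2*(n+1):ℕ):ℤ) by push_cast; ring,
      zpow_neg, zpow_natCast, sqrt_pow_even hr]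

lemma p4 (n : ℕ) : r ^ (2*(-((n:ℤ)+1))+1) = (r ^ (2*n+1))⁻¹ := by
  rw [show (2*(-((n:ℤ)+1))+1) = -((2*n+1:ℕ):ℤ) by push_cast; ring, zpow_neg, zpow_natCast]

lemma sqrt_zpow_two (hr : 0 < r) : (Real.sqrt r) ^ (2:ℤ) = r := by
  rw [show ((2:ℤ)) = ((2:ℕ):ℤ) from rfl, zpow_natCast, Real.sq_sqrt hr.le]

lemma negSucc_gg (hr : 0 < r) (n : ℕ) :
    (r ^ (n+1))⁻¹ / (1 + (r ^ (2*n+1))⁻¹) = gg r n := by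
  have hd := denom_pos hr n
  have hp1 : (0:ℝ) < r ^ (n+1) := pow_pos hr _
  have hp2 : (0:ℝ) < r ^ (2*n+1) := pow_pos hr _
  rw [gg, div_eq_div_iff (by positivity) hd.ne']
  field_simp
  ring

lemma zpow_ofNat_eval (hr : 0 < r) (n : ℕ) :
    (Real.sqrt r) ^ (2*(n:ℤ)) / (1 + r ^ (2*(n:ℤ)+1)) = gg r n := by
  rw [p1 hr, p2, gg]

lemma zpow_negSucc_eval (hr : 0 < r) (n : ℕ) :
    (Real.sqrt r) ^ (2*(-((n:ℤ)+1))) / (1 + r ^ (2*(-((n:ℤ)+1))+1)) = gg r n := by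
  rw [p3 hr, p4, negSucc_gg hr]

lemma ev1p (hr : 0 < r) (n : ℕ) :
    (((n:ℤ)):ℝ) * Real.sqrt r ^ (2*(n:ℤ)-1) / (1 + r ^ (2*(n:ℤ)+1))
      = (Real.sqrt r)⁻¹ * ((n:ℝ) * gg r n) := by
  rw [zpow_sub₀ (sqrt_ne hr), zpow_one, p1 hr, p2, gg]
  push_cast
  ring

lemma ev1n (hr : 0 < r) (n : ℕ) :
    ((-((n:ℤ)+1) : ℤ):ℝ) * Real.sqrt r ^ (2*(-((n:ℤ)+1))-1) / (1 + r ^ (2*(-((n:ℤ)+1))+1))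
      = (Real.sqrt r)⁻¹ * ((-(n:ℝ)-1) * gg r n) := by
  rw [zpow_sub₀ (sqrt_ne hr), zpow_one, p3 hr, p4, ← negSucc_gg hr]
  push_cast
  ring

lemma ev2p (hr : 0 < r) (n : ℕ) :
    (((n:ℤ)):ℝ)^2 * Real.sqrt r ^ (2*(n:ℤ)-2) / (1 + r ^ (2*(n:ℤ)+1))
      = r⁻¹ * ((n:ℝ)^2 * gg r n) := by
  rw [zpow_sub₀ (sqrt_ne hr), sqrt_zpow_two hr, p1 hr, p2, gg]
  push_cast
  ring

lemma ev2n (hr : 0 < r) (n : ℕ) :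
    ((-((n:ℤ)+1) : ℤ):ℝ)^2 * Real.sqrt r ^ (2*(-((n:ℤ)+1))-2) / (1 + r ^ (2*(-((n:ℤ)+1))+1))
      = r⁻¹ * (((n:ℝ)+1)^2 * gg r n) := by
  rw [zpow_sub₀ (sqrt_ne hr), sqrt_zpow_two hr, p3 hr, p4, ← negSucc_gg hr]
  push_cast
  ring

end
section
variable {r : ℝ}

lemma hasSum0 (hr : 0 < r) (hr1 : r < 1) :
    HasSum (fun n : ℤ => Real.sqrt r ^ (2*n) / (1 + r ^ (2*n+1))) (GG r + GG r) := by
  have hG := (summable_gg hr hr1).hasSum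
  refine HasSum.of_nat_of_neg_add_one ?_ ?_
  · have e : gg r = (fun n : ℕ => Real.sqrt r ^ (2*(n:ℤ)) / (1 + r ^ (2*(n:ℤ)+1))) :=
      funext fun n => (zpow_ofNat_eval hr n).symm
    exact e ▸ hG
  · have e : gg r = (fun n : ℕ => Real.sqrt r ^ (2*(-((n:ℤ)+1))) / (1 + r ^ (2*(-((n:ℤ)+1))+1))) :=
      funext fun n => (zpow_negSucc_eval hr n).symm
    exact e ▸ hG

lemma summable_n_gg (hr : 0 < r) (hr1 : r < 1) : Summable (fun n : ℕ => (n:ℝ) * gg r n) := by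
  simpa using summable_pow_gg hr hr1 1

lemma hasSum1 (hr : 0 < r) (hr1 : r < 1) :
    HasSum (fun n : ℤ => (n:ℝ) * Real.sqrt r ^ (2*n-1) / (1 + r ^ (2*n+1)))
      ((Real.sqrt r)⁻¹ * NN r + (Real.sqrt r)⁻¹ * (-(NN r + GG r))) := by
  have hG := (summable_gg hr hr1).hasSum
  have hN : HasSum (fun n : ℕ => (n:ℝ) * gg r n) (NN r) := (summable_n_gg hr hr1).hasSum
  refine HasSum.of_nat_of_neg_add_one ?_ ?_
  · have h := hN.mul_left ((Real.sqrt r)⁻¹)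
    have e : (fun n : ℕ => (Real.sqrt r)⁻¹ * ((n:ℝ) * gg r n))
        = fun n : ℕ => (((n:ℤ)):ℝ) * Real.sqrt r ^ (2*(n:ℤ)-1) / (1 + r ^ (2*(n:ℤ)+1)) :=
      funext fun n => (ev1p hr n).symm
    exact e ▸ h
  · have h' : HasSum (fun n : ℕ => (-(n:ℝ)-1) * gg r n) (-(NN r + GG r)) := by
      have h := (hN.add hG).neg
      have e : (fun n : ℕ => -((n:ℝ) * gg r n + gg r n)) = fun n : ℕ => (-(n:ℝ)-1) * gg r n :=
        funext fun n => by ring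
      exact e ▸ h
    have h := h'.mul_left ((Real.sqrt r)⁻¹)
    have e : (fun n : ℕ => (Real.sqrt r)⁻¹ * ((-(n:ℝ)-1) * gg r n))
        = fun n : ℕ => ((-((n:ℤ)+1) : ℤ):ℝ) * Real.sqrt r ^ (2*(-((n:ℤ)+1))-1)
            / (1 + r ^ (2*(-((n:ℤ)+1))+1)) :=
      funext fun n => (ev1n hr n).symm
    exact e ▸ h

lemma hasSum2 (hr : 0 < r) (hr1 : r < 1) :
    HasSum (fun n : ℤ => (n:ℝ)^2 * Real.sqrt r ^ (2*n-2) / (1 + r ^ (2*n+1)))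
      (r⁻¹ * QQ r + r⁻¹ * (QQ r + (2 * NN r + GG r))) := by
  have hG := (summable_gg hr hr1).hasSum
  have hN : HasSum (fun n : ℕ => (n:ℝ) * gg r n) (NN r) := (summable_n_gg hr hr1).hasSum
  have hQ : HasSum (fun n : ℕ => (n:ℝ)^2 * gg r n) (QQ r) := (summable_pow_gg hr hr1 2).hasSum
  refine HasSum.of_nat_of_neg_add_one ?_ ?_
  · have h := hQ.mul_left (r⁻¹)
    have e : (fun n : ℕ => r⁻¹ * ((n:ℝ)^2 * gg r n))
        = fun n : ℕ => (((n:ℤ)):ℝ)^2 * Real.sqrt r ^ (2*(n:ℤ)-2) / (1 + r ^ (2*(n:ℤ)+1)) :=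
      funext fun n => (ev2p hr n).symm
    exact e ▸ h
  · have h' : HasSum (fun n : ℕ => ((n:ℝ)+1)^2 * gg r n) (QQ r + (2 * NN r + GG r)) := by
      have h := hQ.add ((hN.mul_left 2).add hG)
      have e : (fun n : ℕ => (n:ℝ)^2 * gg r n + (2 * ((n:ℝ) * gg r n) + gg r n))
          = fun n : ℕ => ((n:ℝ)+1)^2 * gg r n := funext fun n => by ring
      exact e ▸ h
    have h := h'.mul_left (r⁻¹)
    have e : (fun n : ℕ => r⁻¹ * (((n:ℝ)+1)^2 * gg r n))
        = fun n : ℕ => ((-((n:ℤ)+1) : ℤ):ℝ)^2 * Real.sqrt r ^ (2*(-((n:ℤ)+1))-2)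
            / (1 + r ^ (2*(-((n:ℤ)+1))+1)) :=
      funext fun n => (ev2n hr n).symm
    exact e ▸ h

end
section
variable {r : ℝ}

lemma GG_lower (hr : 0 < r) (hr1 : r < 1) : (1+r)⁻¹ ≤ GG r := by
  have h := Summable.le_tsum (summable_gg hr hr1) 0 (fun j _ => gg_nonneg hr j)
  have h0 : gg r 0 = (1+r)⁻¹ := by simp [gg]
  rwa [h0] at h

lemma GG_upper (hr : 0 < r) (hr1 : r < 1) : GG r ≤ (1-r)⁻¹ := by
  have h := Summable.tsum_le_tsum (gg_le hr) (summable_gg hr hr1)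
    (summable_geometric_of_lt_one hr.le hr1)
  rwa [tsum_geometric_of_lt_one hr.le hr1] at h

lemma GG_pos (hr : 0 < r) (hr1 : r < 1) : 0 < GG r :=
  lt_of_lt_of_le (by positivity) (GG_lower hr hr1)

lemma NN_nonneg (hr : 0 < r) : 0 ≤ NN r :=
  tsum_nonneg fun n => mul_nonneg (by positivity) (gg_nonneg hr n)

lemma QQ_nonneg (hr : 0 < r) : 0 ≤ QQ r :=
  tsum_nonneg fun n => mul_nonneg (by positivity) (gg_nonneg hr n)

noncomputable def CC : ℝ := ∑' n : ℕ, (n:ℝ)^2 * 2 * (1/2:ℝ)^n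

lemma summable_CC : Summable (fun n : ℕ => (n:ℝ)^2 * 2 * (1/2:ℝ)^n) := by
  have h := summable_pow_mul_geometric_of_norm_lt_one (R := ℝ) 2 (r := 1/2)
    (by rw [Real.norm_eq_abs, abs_of_pos (by norm_num : (0:ℝ) < 1/2)]; norm_num)
  exact (h.mul_left 2).congr fun n => by ring

lemma bound_q (hr : 0 < r) (h2 : r ≤ 1/2) (n : ℕ) :
    (n:ℝ)^2 * gg r n ≤ r * ((n:ℝ)^2 * 2 * (1/2:ℝ)^n) := by
  cases n with
  | zero => simp
  | succ m =>
    have h1 : gg r (m+1) ≤ r^(m+1) := gg_le hr _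
    have h2' : r^m ≤ (1/2:ℝ)^m := pow_le_pow_left₀ hr.le h2 m
    calc ((m+1:ℕ):ℝ)^2 * gg r (m+1) ≤ ((m+1:ℕ):ℝ)^2 * r^(m+1) :=
          mul_le_mul_of_nonneg_left h1 (by positivity)
      _ = ((m+1:ℕ):ℝ)^2 * r * r^m := by ring
      _ ≤ ((m+1:ℕ):ℝ)^2 * r * (1/2:ℝ)^m :=
          mul_le_mul_of_nonneg_left h2' (by positivity)
      _ = r * (((m+1:ℕ):ℝ)^2 * 2 * (1/2:ℝ)^(m+1)) := by rw [pow_succ]; ring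

lemma QQ_le (hr : 0 < r) (h2 : r ≤ 1/2) (hr1 : r < 1) : QQ r ≤ r * CC := by
  have h := Summable.tsum_le_tsum (bound_q hr h2) (summable_pow_gg hr hr1 2) (summable_CC.mul_left r)
  rwa [tsum_mul_left] at h

lemma NN_le_QQ (hr : 0 < r) (hr1 : r < 1) : NN r ≤ QQ r := by
  refine Summable.tsum_le_tsum (fun n => ?_) (summable_n_gg hr hr1) (summable_pow_gg hr hr1 2)
  have : (n:ℝ) ≤ (n:ℝ)^2 := by exact_mod_cast Nat.le_self_pow two_ne_zero n
  exact mul_le_mul_of_nonneg_right this (gg_nonneg hr n)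

lemma hev : ∀ᶠ x in 𝓝[>] (0:ℝ), x ∈ Set.Ioo (0:ℝ) (1/2) :=
  Ioo_mem_nhdsGT (by norm_num)

lemma tendsto_GG : Tendsto GG (𝓝[>] (0:ℝ)) (𝓝 1) := by
  have hlow : Tendsto (fun x : ℝ => (1+x)⁻¹) (𝓝[>] (0:ℝ)) (𝓝 1) := by
    have h : Tendsto (fun x : ℝ => (1+x)) (𝓝 0) (𝓝 1) := by
      simpa using (tendsto_id (x := 𝓝 (0:ℝ))).const_add (1:ℝ)
    have := h.inv₀ (by norm_num)
    simpa using this.mono_left nhdsWithin_le_nhds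
  have hup : Tendsto (fun x : ℝ => (1-x)⁻¹) (𝓝[>] (0:ℝ)) (𝓝 1) := by
    have h : Tendsto (fun x : ℝ => (1-x)) (𝓝 0) (𝓝 1) := by
      simpa using (tendsto_id (x := 𝓝 (0:ℝ))).const_sub (1:ℝ)
    have := h.inv₀ (by norm_num)
    simpa using this.mono_left nhdsWithin_le_nhds
  refine tendsto_of_tendsto_of_tendsto_of_le_of_le' hlow hup ?_ ?_
  · filter_upwards [hev] with x hx
    exact GG_lower hx.1 (by linarith [hx.2])
  · filter_upwards [hev] with x hx
    exact GG_upper hx.1 (by linarith [hx.2])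

lemma tendsto_QQ : Tendsto QQ (𝓝[>] (0:ℝ)) (𝓝 0) := by
  refine squeeze_zero' (g := fun x => x * CC) ?_ ?_ ?_
  · filter_upwards [hev] with x hx; exact QQ_nonneg hx.1
  · filter_upwards [hev] with x hx
    exact QQ_le hx.1 hx.2.le (by linarith [hx.2])
  · have h : Tendsto (fun x : ℝ => x * CC) (𝓝 0) (𝓝 0) := by
      simpa using (tendsto_id (x := 𝓝 (0:ℝ))).mul_const CC
    exact h.mono_left nhdsWithin_le_nhds

lemma tendsto_NN : Tendsto NN (𝓝[>] (0:ℝ)) (𝓝 0) := by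
  refine squeeze_zero' (g := fun x => x * CC) ?_ ?_ ?_
  · filter_upwards [hev] with x hx; exact NN_nonneg hx.1
  · filter_upwards [hev] with x hx
    exact (NN_le_QQ hx.1 (by linarith [hx.2])).trans (QQ_le hx.1 hx.2.le (by linarith [hx.2]))
  · have h : Tendsto (fun x : ℝ => x * CC) (𝓝 0) (𝓝 0) := by
      simpa using (tendsto_id (x := 𝓝 (0:ℝ))).mul_const CC
    exact h.mono_left nhdsWithin_le_nhds

lemma alpha0_eq (hr : 0 < r) (hr1 : r < 1) : alpha0 r (Real.sqrt r) = GG r / π := by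
  simp only [alpha0, (hasSum0 hr hr1).tsum_eq]
  field_simp [Real.pi_ne_zero]
  ring

lemma alpha1_eq (hr : 0 < r) (hr1 : r < 1) :
    alpha1 r (Real.sqrt r) = -(GG r) / (2*π*Real.sqrt r) := by
  simp only [alpha1, (hasSum1 hr hr1).tsum_eq]
  field_simp [Real.pi_ne_zero, sqrt_ne hr]
  ring

lemma alpha2_eq (hr : 0 < r) (hr1 : r < 1) :
    alpha2 r (Real.sqrt r) = (2*QQ r + 2*NN r + GG r) / (2*π*r) := by
  simp only [alpha2, (hasSum2 hr hr1).tsum_eq]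
  field_simp [Real.pi_ne_zero, hr.ne']
  ring

lemma key_eq (hr : 0 < r) (hr1 : r < 1) :
    r * szegoMetricSq r (Real.sqrt r) = (4*QQ r + 4*NN r + GG r)/(4*GG r) := by
  have hG := GG_pos hr hr1
  have ha1 : (-(GG r) / (2*π*Real.sqrt r))^2 = (GG r)^2 / (4*π^2*r) := by
    rw [div_pow, neg_sq, mul_pow, mul_pow, Real.sq_sqrt hr.le]
    norm_num
  simp only [szegoMetricSq, alpha0_eq hr hr1, alpha1_eq hr hr1, alpha2_eq hr hr1, ha1]
  field_simp [Real.pi_ne_zero, hr.ne', hG.ne']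
  ring

end

/-- For the annulus `Ω_r = {r < |z| < 1}`, the Szegő metric at `√r` in the unit direction
satisfies `lim_{r→0⁺} √r·F_S^{Ω_r}(√r,1) = 1/2`. -/
theorem szego_metric_annulus_at_sqrt :
    Tendsto (fun r : ℝ => Real.sqrt r * Real.sqrt (szegoMetricSq r (Real.sqrt r)))
      (𝓝[>] (0:ℝ)) (𝓝 (1/2)) := by
  have heq : ∀ᶠ x in 𝓝[>] (0:ℝ),
      Real.sqrt x * Real.sqrt (szegoMetricSq x (Real.sqrt x))
        = Real.sqrt ((4*QQ x + 4*NN x + GG x)/(4*GG x)) := by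
    filter_upwards [hev] with x hx
    rw [← Real.sqrt_mul hx.1.le, key_eq hx.1 (by linarith [hx.2])]
  rw [tendsto_congr' heq]
  have h1 : Tendsto (fun x => (4*QQ x + 4*NN x + GG x)/(4*GG x)) (𝓝[>] (0:ℝ)) (𝓝 (1/4)) := by
    have hnum : Tendsto (fun x => 4*QQ x + 4*NN x + GG x) (𝓝[>] (0:ℝ)) (𝓝 1) := by
      have := ((tendsto_QQ.const_mul 4).add (tendsto_NN.const_mul 4)).add tendsto_GG
      simpa using this
    have hden : Tendsto (fun x => 4*GG x) (𝓝[>] (0:ℝ)) (𝓝 4) := by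
      simpa using tendsto_GG.const_mul 4
    have := hnum.div hden (by norm_num)
    simpa [Pi.div_def] using this
  have h2 := h1.sqrt
  have : Real.sqrt (1/4 : ℝ) = 1/2 := by
    rw [show (1/4:ℝ) = (1/2)^2 by norm_num, Real.sqrt_sq (by norm_num)]
  rwa [this] at h2
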